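/- Let n ≥ 2 and let Φ be the conditional sequential-counter AtMostOne encoding consisting of the clauses (¬x_1 ∨ p_1), (¬y ∨ ¬x_n ∨ ¬p_{n−1}), and for 1 < i < n the clauses (¬x_i ∨ p_i), (¬p_{i−1} ∨ p_i), (¬y ∨ ¬x_i ∨ ¬p_{i−1}). Then assigning y to true and any single x_i to true makes unit propagation derive ¬x_j from the restricted formula, for every index j ≠ i. -/
import Mathlib


abbrev Lit (V : Type) := V × Bool
abbrev Clause (V : Type) := Finset (Lit V)
abbrev CnfForm (V : Type) := Finset (Clause V)

variable {V : Type} [DecidableEq V]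

/-- Restriction Φ|_ρ : remove clauses containing a literal of ρ, and delete from the
remaining clauses every literal whose complement is in ρ. -/
def restrict (Φ : CnfForm V) (ρ : Finset (Lit V)) : CnfForm V :=
  (Φ.filter fun c => ∀ l ∈ ρ, l ∉ c).image fun c => c.filter fun l => (l.1, !l.2) ∉ ρ

/-- Unit propagation derives the literal `l` from `Φ` : repeatedly assigning the
literals of unit clauses true and simplifying eventually produces the unit clause
`{l}` or the empty clause. -/
inductive UPDerives : CnfForm V → Lit V → Prop
  | unit {Φ : CnfForm V} {l : Lit V} : ({l} : Clause V) ∈ Φ → UPDerives Φ l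
  | bot {Φ : CnfForm V} {l : Lit V} : (∅ : Clause V) ∈ Φ → UPDerives Φ l
  | step {Φ : CnfForm V} {l : Lit V} (m : Lit V) : ({m} : Clause V) ∈ Φ →
      UPDerives (restrict Φ {m}) l → UPDerives Φ l

/-- Unit propagation derives the empty clause from `Φ`, i.e. `Φ* = ⊥`. -/
inductive UPEmpty : CnfForm V → Prop
  | bot {Φ : CnfForm V} : (∅ : Clause V) ∈ Φ → UPEmpty Φ
  | step {Φ : CnfForm V} (m : Lit V) : ({m} : Clause V) ∈ Φ → UPEmpty (restrict Φ {m}) → UPEmpty Φ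

/-- `UPReach Φ Ψ` : the formula `Ψ` is obtained from `Φ` by a sequence of
unit-propagation steps. -/
inductive UPReach : CnfForm V → CnfForm V → Prop
  | refl (Φ : CnfForm V) : UPReach Φ Φ
  | step {Φ Ψ : CnfForm V} (m : Lit V) : UPReach Φ Ψ → ({m} : Clause V) ∈ Ψ →
      UPReach Φ (restrict Ψ {m})

/-- The set of variables occurring in `Φ`. -/
def varsOf (Φ : CnfForm V) : Finset V := Φ.biUnion fun c => c.image Prod.fst

/-- A Horn formula: every clause contains at most one positive literal. -/
def IsHorn (Φ : CnfForm V) : Prop := ∀ c ∈ Φ, (c.filter fun l => l.2 = true).card ≤ 1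

/-- `Φ⁻` : the negative clauses of `Φ` (no positive literal). -/
def negClauses (Φ : CnfForm V) : CnfForm V := Φ.filter fun c => ∀ l ∈ c, l.2 = false

/-- `Φ⁺` : the clauses of `Φ` with exactly one positive literal. -/
def posPart (Φ : CnfForm V) : CnfForm V :=
  Φ.filter fun c => (c.filter fun l => l.2 = true).card = 1

/-- The conditional sequential-counter AtMostOne encoding of `y → (x_1 + ⋯ + x_n ≤ 1)`:
the clauses `(¬x_1 ∨ p_1)`, `(¬y ∨ ¬x_n ∨ ¬p_{n-1})`, and for `1 < i < n` the clauses
`(¬x_i ∨ p_i)`, `(¬p_{i-1} ∨ p_i)`, `(¬y ∨ ¬x_i ∨ ¬p_{i-1})`. -/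
def seqAMOCond (n : ℕ) (x p : ℕ → V) (y : V) : CnfForm V :=
  insert ({(x 1, false), (p 1, true)} : Clause V)
    (insert ({(y, false), (x n, false), (p (n - 1), false)} : Clause V)
      ((Finset.Ioo 1 n).biUnion fun i =>
        ({({(x i, false), (p i, true)} : Clause V),
          ({(p (i - 1), false), (p i, true)} : Clause V),
          ({(y, false), (x i, false), (p (i - 1), false)} : Clause V)} : CnfForm V)))

section Helpers
variable {V : Type} [DecidableEq V]

lemma mem_restrict {Φ : CnfForm V} {ρ : Finset (Lit V)} {c : Clause V}
    (hc : c ∈ Φ) (h : ∀ l ∈ ρ, l ∉ c) :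
    c.filter (fun l => (l.1, !l.2) ∉ ρ) ∈ restrict Φ ρ :=
  Finset.mem_image.mpr ⟨c, Finset.mem_filter.mpr ⟨hc, h⟩, rfl⟩

lemma mem_restrict_single {Φ : CnfForm V} {l : Lit V} {c : Clause V}
    (hc : c ∈ Φ) (h : ∀ m ∈ c, m.1 ≠ l.1) : c ∈ restrict Φ ({l} : Finset (Lit V)) := by
  have h2 : ∀ m ∈ ({l} : Finset (Lit V)), m ∉ c := by
    intro m hm; rw [Finset.mem_singleton] at hm; rw [hm]
    intro hl; exact h l hl rfl
  have h3 := mem_restrict hc h2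
  rwa [Finset.filter_true_of_mem] at h3
  intro m hm
  simp only [Finset.mem_singleton]
  intro he
  exact h m hm (by rw [← he])

lemma unit_restrict_single {Φ : CnfForm V} {l t : Lit V}
    (h : ({t, (l.1, !l.2)} : Clause V) ∈ Φ) (ht : t.1 ≠ l.1) :
    ({t} : Clause V) ∈ restrict Φ ({l} : Finset (Lit V)) := by
  have h2 : ∀ m ∈ ({l} : Finset (Lit V)), m ∉ ({t, (l.1, !l.2)} : Clause V) := by
    intro m hm; rw [Finset.mem_singleton] at hm; rw [hm]
    simp only [Finset.mem_insert, Finset.mem_singleton, not_or]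
    refine ⟨fun he => ht (by rw [he]), fun he => ?_⟩
    have h5 : l.2 = !l.2 := congrArg Prod.snd he
    simp at h5
  have h3 := mem_restrict h h2
  have hpt : ((t.1, !t.2) : Lit V) ∉ ({l} : Finset (Lit V)) := by
    simp only [Finset.mem_singleton]
    intro he
    exact ht (by rw [← he])
  have h4 : ({t, (l.1, !l.2)} : Clause V).filter (fun m => (m.1, !m.2) ∉ ({l} : Finset (Lit V))) = {t} := by
    rw [Finset.filter_insert, if_pos hpt, Finset.filter_singleton, if_neg (by simp)]
    rfl
  rwa [h4] at h3

end Helpers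
section Chains
variable {V : Type} [DecidableEq V]

lemma chainDown (g : ℕ → Lit V) (t : Lit V) :
    ∀ (d a : ℕ) (Φ : CnfForm V),
      ({g (a + d)} : Clause V) ∈ Φ →
      (∀ k, a ≤ k → k < a + d → ({g k, ((g (k+1)).1, !(g (k+1)).2)} : Clause V) ∈ Φ) →
      ({t, ((g a).1, !(g a).2)} : Clause V) ∈ Φ →
      (∀ k, a ≤ k → k ≤ a + d → ∀ k', a ≤ k' → k' ≤ a + d → (g k).1 = (g k').1 → k = k') →
      (∀ k, a ≤ k → k ≤ a + d → (g k).1 ≠ t.1) →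
      UPDerives Φ t := by
  intro d
  induction d with
  | zero =>
    intro a Φ hu hc humt hinj hvt
    refine UPDerives.step (g a) (by simpa using hu) (UPDerives.unit ?_)
    exact unit_restrict_single (by simpa using humt) (hvt a le_rfl (by simp)).symm
  | succ d ih =>
    intro a Φ hu hc humt hinj hvt
    have hne : ∀ k, a ≤ k → k ≤ a + d → (g k).1 ≠ (g (a + d + 1)).1 := by
      intro k hk1 hk2 he
      have := hinj k hk1 (by omega) (a + d + 1) (by omega) (by omega) he
      omega
    refine UPDerives.step (g (a + d + 1)) hu (ih a _ ?_ ?_ ?_ ?_ ?_)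
    · exact unit_restrict_single (hc (a + d) (by omega) (by omega)) (hne (a+d) (by omega) le_rfl)
    · intro k hk1 hk2
      refine mem_restrict_single (hc k hk1 (by omega)) ?_
      intro m hm
      rcases Finset.mem_insert.mp hm with h1 | h1
      · rw [h1]; exact hne k hk1 (by omega)
      · rw [Finset.mem_singleton] at h1; rw [h1]
        exact hne (k+1) (by omega) (by omega)
    · refine mem_restrict_single humt ?_
      intro m hm
      rcases Finset.mem_insert.mp hm with h1 | h1
      · rw [h1]
        exact fun hh => hvt (a + d + 1) (by omega) (by omega) hh.symm
      · rw [Finset.mem_singleton] at h1; rw [h1]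
        exact hne a (by omega) (by omega)
    · intro k hk1 hk2 k' hk1' hk2' he
      exact hinj k hk1 (by omega) k' hk1' (by omega) he
    · intro k hk1 hk2
      exact hvt k hk1 (by omega)

lemma chainUp (g : ℕ → Lit V) (t : Lit V) :
    ∀ (d a : ℕ) (Φ : CnfForm V),
      ({g a} : Clause V) ∈ Φ →
      (∀ k, a ≤ k → k < a + d → ({g (k+1), ((g k).1, !(g k).2)} : Clause V) ∈ Φ) →
      ({t, ((g (a + d)).1, !(g (a + d)).2)} : Clause V) ∈ Φ →
      (∀ k, a ≤ k → k ≤ a + d → ∀ k', a ≤ k' → k' ≤ a + d → (g k).1 = (g k').1 → k = k') →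
      (∀ k, a ≤ k → k ≤ a + d → (g k).1 ≠ t.1) →
      UPDerives Φ t := by
  intro d
  induction d with
  | zero =>
    intro a Φ hu hc humt hinj hvt
    refine UPDerives.step (g a) (by simpa using hu) (UPDerives.unit ?_)
    exact unit_restrict_single (by simpa using humt) (hvt a le_rfl (by simp)).symm
  | succ d ih =>
    intro a Φ hu hc humt hinj hvt
    have hne : ∀ k, a + 1 ≤ k → k ≤ a + d + 1 → (g k).1 ≠ (g a).1 := by
      intro k hk1 hk2 he
      have := hinj k (by omega) (by omega) a (by omega) (by omega) he
      omega
    refine UPDerives.step (g a) hu (ih (a + 1) _ ?_ ?_ ?_ ?_ ?_)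
    · exact unit_restrict_single (hc a le_rfl (by omega)) (hne (a+1) le_rfl (by omega))
    · intro k hk1 hk2
      refine mem_restrict_single (hc k (by omega) (by omega)) ?_
      intro m hm
      rcases Finset.mem_insert.mp hm with h1 | h1
      · rw [h1]; exact hne (k+1) (by omega) (by omega)
      · rw [Finset.mem_singleton] at h1; rw [h1]
        exact hne k hk1 (by omega)
    · have he : a + 1 + d = a + (d + 1) := by omega
      rw [he]
      refine mem_restrict_single humt ?_
      intro m hm
      rcases Finset.mem_insert.mp hm with h1 | h1
      · rw [h1]
        exact fun hh => (hvt a (by omega) (by omega)) hh.symm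
      · rw [Finset.mem_singleton] at h1; rw [h1]
        exact hne (a + d + 1) (by omega) (by omega)
    · intro k hk1 hk2 k' hk1' hk2' he
      exact hinj k (by omega) (by omega) k' (by omega) (by omega) he
    · intro k hk1 hk2
      exact hvt k (by omega) (by omega)

end Chains
section Membership
variable {V : Type} [DecidableEq V]

lemma memA (n : ℕ) (x p : ℕ → V) (y : V) {k : ℕ} (h1 : 1 ≤ k) (h2 : k < n) :
    ({(x k, false), (p k, true)} : Clause V) ∈ seqAMOCond n x p y := by
  unfold seqAMOCond
  simp only [Finset.mem_insert, Finset.mem_biUnion, Finset.mem_Ioo]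
  by_cases hk : k = 1
  · subst hk; left; rfl
  · right; right
    exact ⟨k, ⟨by omega, h2⟩, by simp⟩

lemma memB (n : ℕ) (x p : ℕ → V) (y : V) {k : ℕ} (h1 : 1 < k) (h2 : k < n) :
    ({(p (k - 1), false), (p k, true)} : Clause V) ∈ seqAMOCond n x p y := by
  unfold seqAMOCond
  simp only [Finset.mem_insert, Finset.mem_biUnion, Finset.mem_Ioo]
  right; right
  exact ⟨k, ⟨h1, h2⟩, by simp⟩

lemma memD (n : ℕ) (x p : ℕ → V) (y : V) {k : ℕ} (h1 : 2 ≤ k) (h2 : k ≤ n) :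
    ({(y, false), (x k, false), (p (k - 1), false)} : Clause V) ∈ seqAMOCond n x p y := by
  unfold seqAMOCond
  simp only [Finset.mem_insert, Finset.mem_biUnion, Finset.mem_Ioo]
  by_cases hk : k = n
  · subst hk; right; left; rfl
  · right; right
    exact ⟨k, ⟨by omega, by omega⟩, by simp⟩

end Membership
/-- For the conditional sequential-counter AtMostOne encoding,
assigning `y` to true and any single `x_i` to true makes unit propagation derive
`¬x_j` from the restricted formula, for every index `j ≠ i`. -/
theorem stmt7 {V : Type} [DecidableEq V] (n : ℕ) (hn : 2 ≤ n) (x p : ℕ → V) (y : V)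
    (hx : ∀ i ∈ Finset.Icc 1 n, ∀ j ∈ Finset.Icc 1 n, x i = x j → i = j)
    (hp : ∀ i ∈ Finset.Icc 1 (n - 1), ∀ j ∈ Finset.Icc 1 (n - 1), p i = p j → i = j)
    (hxp : ∀ i ∈ Finset.Icc 1 n, ∀ j ∈ Finset.Icc 1 (n - 1), x i ≠ p j)
    (hxy : ∀ i ∈ Finset.Icc 1 n, x i ≠ y)
    (hpy : ∀ j ∈ Finset.Icc 1 (n - 1), p j ≠ y)
    (i : ℕ) (hi : i ∈ Finset.Icc 1 n) :
    ∀ j ∈ Finset.Icc 1 n, j ≠ i →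
      UPDerives (restrict (seqAMOCond n x p y) ({(y, true), (x i, true)} : Finset (Lit V)))
        (x j, false) := by
  intro j hj hji
  simp only [Finset.mem_Icc] at hi hj
  obtain ⟨hi1, hi2⟩ := hi
  obtain ⟨hj1, hj2⟩ := hj
  set ρ : Finset (Lit V) := {(y, true), (x i, true)} with hρdef
  -- basic variable distinctness facts
  have hpy' : ∀ k, 1 ≤ k → k ≤ n - 1 → p k ≠ y := fun k h1 h2 =>
    hpy k (Finset.mem_Icc.mpr ⟨h1, h2⟩)
  have hpx' : ∀ k, 1 ≤ k → k ≤ n - 1 → ∀ m, 1 ≤ m → m ≤ n → p k ≠ x m := fun k h1 h2 m hm1 hm2 h =>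
    hxp m (Finset.mem_Icc.mpr ⟨hm1, hm2⟩) k (Finset.mem_Icc.mpr ⟨h1, h2⟩) h.symm
  have hxj_y : x j ≠ y := hxy j (Finset.mem_Icc.mpr ⟨hj1, hj2⟩)
  have hxj_xi : x j ≠ x i := fun h =>
    hji (hx j (Finset.mem_Icc.mpr ⟨hj1, hj2⟩) i (Finset.mem_Icc.mpr ⟨hi1, hi2⟩) h)
  have hpinj : ∀ k, 1 ≤ k → k ≤ n - 1 → ∀ m, 1 ≤ m → m ≤ n - 1 → p k = p m → k = m :=
    fun k h1 h2 m h3 h4 h =>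
      hp k (Finset.mem_Icc.mpr ⟨h1, h2⟩) m (Finset.mem_Icc.mpr ⟨h3, h4⟩) h
  have hno : ∀ (c : Clause V), (∀ m ∈ c, m.2 = true → m.1 ≠ y ∧ m.1 ≠ x i) →
      ∀ l ∈ ρ, l ∉ c := by
    intro c hcm l hl hlc
    have hl2 : l.2 = true ∧ (l.1 = y ∨ l.1 = x i) := by
      simp only [hρdef, Finset.mem_insert, Finset.mem_singleton] at hl
      rcases hl with h | h <;> subst h <;> simp
    obtain ⟨h1, h2⟩ := hcm l hlc hl2.1
    rcases hl2.2 with h | h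
    · exact h1 h
    · exact h2 h
  -- Ψ-membership : unit clause {¬p_{i-1}} (when i ≥ 2)
  have hU1 : 2 ≤ i → ({((p (i-1), false) : Lit V)} : Clause V) ∈
      restrict (seqAMOCond n x p y) ρ := by
    intro h2i
    have hc := memD n x p y h2i hi2
    have ha : p (i-1) ≠ y := hpy' (i-1) (by omega) (by omega)
    have hb : p (i-1) ≠ x i := hpx' (i-1) (by omega) (by omega) i hi1 hi2
    have hno' : ∀ l ∈ ρ, l ∉ ({(y, false), (x i, false), (p (i-1), false)} : Clause V) := by
      refine hno _ ?_
      intro m hm hm2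
      simp only [Finset.mem_insert, Finset.mem_singleton] at hm
      rcases hm with h | h | h <;> subst h <;> simp at hm2
    have h3 := mem_restrict hc hno'
    have hfe : ({(y, false), (x i, false), (p (i-1), false)} : Clause V).filter
        (fun l => (l.1, !l.2) ∉ ρ) = {((p (i-1), false) : Lit V)} := by
      simp [hρdef, Finset.filter_insert, Finset.filter_singleton, ha, hb]
    rwa [hfe] at h3
  -- Ψ-membership : unit clause {p_i} (when i ≤ n-1)
  have hUA : i ≤ n - 1 → ({((p i, true) : Lit V)} : Clause V) ∈
      restrict (seqAMOCond n x p y) ρ := by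
    intro hin
    have hc := memA n x p y hi1 (show i < n by omega)
    have ha : p i ≠ y := hpy' i hi1 hin
    have hb : p i ≠ x i := hpx' i hi1 hin i hi1 hi2
    have hno' : ∀ l ∈ ρ, l ∉ ({(x i, false), (p i, true)} : Clause V) := by
      refine hno _ ?_
      intro m hm hm2
      simp only [Finset.mem_insert, Finset.mem_singleton] at hm
      rcases hm with h | h
      · subst h; simp at hm2
      · subst h; exact ⟨ha, hb⟩
    have h3 := mem_restrict hc hno'
    have hfe : ({(x i, false), (p i, true)} : Clause V).filter
        (fun l => (l.1, !l.2) ∉ ρ) = {((p i, true) : Lit V)} := by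
      simp [hρdef, Finset.filter_insert, Finset.filter_singleton, ha, hb]
    rwa [hfe] at h3
  -- Ψ-membership : B-clauses survive
  have hB : ∀ k, 1 ≤ k → k + 1 ≤ n - 1 →
      ({(p k, false), (p (k+1), true)} : Clause V) ∈ restrict (seqAMOCond n x p y) ρ := by
    intro k h1 h2
    have hc := memB n x p y (show 1 < k + 1 by omega) (show k + 1 < n by omega)
    rw [Nat.add_sub_cancel] at hc
    have ha : p (k+1) ≠ y := hpy' (k+1) (by omega) h2
    have hb : p (k+1) ≠ x i := hpx' (k+1) (by omega) h2 i hi1 hi2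
    have ha' : p k ≠ y := hpy' k h1 (by omega)
    have hb' : p k ≠ x i := hpx' k h1 (by omega) i hi1 hi2
    have hno' : ∀ l ∈ ρ, l ∉ ({(p k, false), (p (k+1), true)} : Clause V) := by
      refine hno _ ?_
      intro m hm hm2
      simp only [Finset.mem_insert, Finset.mem_singleton] at hm
      rcases hm with h | h
      · subst h; simp at hm2
      · subst h; exact ⟨ha, hb⟩
    have h3 := mem_restrict hc hno'
    have hfe : ({(p k, false), (p (k+1), true)} : Clause V).filter
        (fun l => (l.1, !l.2) ∉ ρ) = {(p k, false), (p (k+1), true)} := by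
      simp [hρdef, Finset.filter_insert, Finset.filter_singleton, ha, hb, ha', hb']
    rwa [hfe] at h3
  -- Ψ-membership : A_j survives
  have hA : 1 ≤ j → j < n →
      ({(x j, false), (p j, true)} : Clause V) ∈ restrict (seqAMOCond n x p y) ρ := by
    intro h1 h2
    have hc := memA n x p y h1 h2
    have ha : p j ≠ y := hpy' j h1 (by omega)
    have hb : p j ≠ x i := hpx' j h1 (by omega) i hi1 hi2
    have hno' : ∀ l ∈ ρ, l ∉ ({(x j, false), (p j, true)} : Clause V) := by
      refine hno _ ?_
      intro m hm hm2
      simp only [Finset.mem_insert, Finset.mem_singleton] at hm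
      rcases hm with h | h
      · subst h; simp at hm2
      · subst h; exact ⟨ha, hb⟩
    have h3 := mem_restrict hc hno'
    have hfe : ({(x j, false), (p j, true)} : Clause V).filter
        (fun l => (l.1, !l.2) ∉ ρ) = {(x j, false), (p j, true)} := by
      simp [hρdef, Finset.filter_insert, Finset.filter_singleton, ha, hb, hxj_y, hxj_xi]
    rwa [hfe] at h3
  -- Ψ-membership : D_j restricted to {¬x_j, ¬p_{j-1}}
  have hD : 2 ≤ j →
      ({(x j, false), (p (j-1), false)} : Clause V) ∈ restrict (seqAMOCond n x p y) ρ := by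
    intro h2j
    have hc := memD n x p y h2j hj2
    have ha : p (j-1) ≠ y := hpy' (j-1) (by omega) (by omega)
    have hb : p (j-1) ≠ x i := hpx' (j-1) (by omega) (by omega) i hi1 hi2
    have hno' : ∀ l ∈ ρ, l ∉ ({(y, false), (x j, false), (p (j-1), false)} : Clause V) := by
      refine hno _ ?_
      intro m hm hm2
      simp only [Finset.mem_insert, Finset.mem_singleton] at hm
      rcases hm with h | h | h <;> subst h <;> simp at hm2
    have h3 := mem_restrict hc hno'
    have hfe : ({(y, false), (x j, false), (p (j-1), false)} : Clause V).filter
        (fun l => (l.1, !l.2) ∉ ρ) = {(x j, false), (p (j-1), false)} := by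
      simp [hρdef, Finset.filter_insert, Finset.filter_singleton, ha, hb, hxj_y, hxj_xi]
    rwa [hfe] at h3
  -- main case split
  rcases lt_or_gt_of_ne hji with hlt | hgt
  · -- j < i : descend from unit {¬p_{i-1}}
    have h2i : 2 ≤ i := by omega
    have hd : j + (i - 1 - j) = i - 1 := by omega
    apply chainDown (fun k => ((p k, false) : Lit V)) ((x j, false) : Lit V) (i - 1 - j) j
    · rw [hd]; exact hU1 h2i
    · intro k hk1 hk2
      rw [hd] at hk2
      simpa using hB k (by omega) (by omega)
    · simpa using hA hj1 (by omega)
    · intro k h1 h2 k' h3 h4 he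
      rw [hd] at h2 h4
      exact hpinj k (by omega) (by omega) k' (by omega) (by omega) he
    · intro k h1 h2
      rw [hd] at h2
      exact hpx' k (by omega) (by omega) j hj1 hj2
  · -- j > i : ascend from unit {p_i}
    have hin : i ≤ n - 1 := by omega
    have hd : i + (j - 1 - i) = j - 1 := by omega
    apply chainUp (fun k => ((p k, true) : Lit V)) ((x j, false) : Lit V) (j - 1 - i) i
    · exact hUA hin
    · intro k hk1 hk2
      rw [hd] at hk2
      have hbb := hB k (by omega) (by omega)
      rw [Finset.pair_comm] at hbb
      simpa using hbb
    · rw [hd]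
      simpa using hD (by omega)
    · intro k h1 h2 k' h3 h4 he
      rw [hd] at h2 h4
      exact hpinj k (by omega) (by omega) k' (by omega) (by omega) he
    · intro k h1 h2
      rw [hd] at h2
      exact hpx' k (by omega) (by omega) j hj1 hj2
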